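/- Main theorem (decidable hierarchy of 2-process affine models): for any two 2-process affine tasks A on n = 3^ℓ and B on m = 3^{ℓ'} (ℓ, ℓ' ≥ 1), the affine model B* solves A (i.e., there exist k ≥ 1 and a chromatic carrier-preserving simplicial map δ from B^{⋆k} to the subdivided 1-simplex on {0,…,n} with δ(B^{⋆k}) ⊆ A) if and only if class(A) ⊑ class(B). -/

import Mathlib

/-!
2-process affine tasks, modeled combinatorially.
The ℓ-th iterated standard chromatic subdivision of the 1-simplex is the path
graph on vertices `{0, …, n}`, `n = 3^ℓ`, whose edges are the pairs `{i, i+1}`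
for `0 ≤ i < n`; vertex `i` has color `i % 2`, vertex `0` is the solo vertex of
process `p₀` and vertex `n` the solo vertex of `p₁`.  An edge `{i, i+1}` is
encoded by its left endpoint `i`, and a 2-process affine task on `n` is a
nonempty finite set `A : Finset ℕ` of such edges (left endpoints `< n`).
-/

/-- `StepRel A x y`: the vertices `x` and `y` are joined by an edge of `A`
(the edge `{i, i+1}` being encoded by its left endpoint `i`). -/
def StepRel (A : Finset ℕ) (x y : ℕ) : Prop :=
  (y = x + 1 ∧ x ∈ A) ∨ (x = y + 1 ∧ y ∈ A)

/-- `P₁(A)`: the vertices `0` and `n` are joined by a path all of whose edges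
lie in `A`. -/
def P1 (n : ℕ) (A : Finset ℕ) : Prop := Relation.ReflTransGen (StepRel A) 0 n

/-- `P₂(A)`: the edge `{0, 1}` belongs to `A`. -/
def P2 (A : Finset ℕ) : Prop := 0 ∈ A

/-- `P₃(A)`: the edge `{n-1, n}` belongs to `A`. -/
def P3 (n : ℕ) (A : Finset ℕ) : Prop := n - 1 ∈ A

open Classical in
/-- The class of a 2-process affine task `A` on `{0,…,n}`:
`1` if `P₁(A)`; `2` if `¬P₁ ∧ P₂ ∧ P₃`; `3` if `¬P₁ ∧ P₂ ∧ ¬P₃`;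
`4` if `¬P₁ ∧ ¬P₂ ∧ P₃`; `5` if `¬P₁ ∧ ¬P₂ ∧ ¬P₃`. -/
noncomputable def classOf (n : ℕ) (A : Finset ℕ) : ℕ :=
  if P1 n A then 1
  else if P2 A then (if P3 n A then 2 else 3)
  else (if P3 n A then 4 else 5)

/-- The class order `⊑` on `{1, …, 5}`: `c ⊑ c'` iff `c = c'`, or `c = 1`,
or `c' = 5`, or (`c = 2` and `c' ∈ {3, 4}`). -/
def ClassLE (c c' : ℕ) : Prop :=
  c = c' ∨ c = 1 ∨ c' = 5 ∨ (c = 2 ∧ (c' = 3 ∨ c' = 4))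

/-- The composition `A ⋆ B` of a task `A` on `{0,…,n}` with a task `B` on
`{0,…,m}`: each edge of `A` is replaced by an appropriately oriented copy of
`B`; its edges are `{i·m + r, i·m + r + 1}` for `{i, i+1} ∈ A` and
`{j, j+1} ∈ B`, where `r = j` if `i` is even and `r = m - 1 - j` if `i` is odd
(edges encoded by left endpoints). -/
def comp (m : ℕ) (A B : Finset ℕ) : Finset ℕ :=
  (A ×ˢ B).image fun p => p.1 * m + (if Even p.1 then p.2 else m - 1 - p.2)

/-- `iterTask n A k` is the iterate `A^{⋆k}` (for `k ≥ 1`) of a task `A` on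
`{0,…,n}`, a task on `{0,…,n^k}`: `A^{⋆1} = A`, `A^{⋆(k+1)} = A^{⋆k} ⋆ A`.
(The value at `k = 0` is irrelevant and set to `A`.) -/
def iterTask (n : ℕ) (A : Finset ℕ) : ℕ → Finset ℕ
  | 0 => A
  | 1 => A
  | k + 2 => comp n (iterTask n A (k + 1)) A

/-- A chromatic carrier-preserving simplicial map `δ` from a task `A` on
`{0,…,n}` to the subdivided 1-simplex on `{0,…,m}`: `δ` maps `{0,…,n}` to
`{0,…,m}`; `δ i ≡ i (mod 2)` for every vertex incident to an edge of `A`;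
`|δ (i+1) - δ i| = 1` for every edge `{i, i+1} ∈ A`; `δ 0 = 0` whenever
`{0,1} ∈ A`; and `δ n = m` whenever `{n-1, n} ∈ A`. -/
def IsCCMap (n m : ℕ) (A : Finset ℕ) (δ : ℕ → ℕ) : Prop :=
  (∀ i ≤ n, δ i ≤ m) ∧
  (∀ i ∈ A, δ i % 2 = i % 2 ∧ δ (i + 1) % 2 = (i + 1) % 2) ∧
  (∀ i ∈ A, δ (i + 1) = δ i + 1 ∨ δ i = δ (i + 1) + 1) ∧
  (0 ∈ A → δ 0 = 0) ∧
  (n - 1 ∈ A → δ n = m)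

/-- The image task `δ(A) = { {δ i, δ (i+1)} : {i, i+1} ∈ A }`
(edges encoded by left endpoints, i.e. by `min (δ i) (δ (i+1))`). -/
def imageTask (A : Finset ℕ) (δ : ℕ → ℕ) : Finset ℕ :=
  A.image fun i => min (δ i) (δ (i + 1))

/-- `Solves m n B A`: the affine model `B*` of a task `B` on `{0,…,m}` solves
the task `A` on `{0,…,n}`, i.e. there exist `k ≥ 1` and a chromatic
carrier-preserving simplicial map `δ` from `B^{⋆k}` (a task on `{0,…,m^k}`)
to the subdivided 1-simplex on `{0,…,n}` with `δ(B^{⋆k}) ⊆ A`. -/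
def Solves (m n : ℕ) (B A : Finset ℕ) : Prop :=
  ∃ k, 1 ≤ k ∧ ∃ δ : ℕ → ℕ,
    IsCCMap (m ^ k) n (iterTask m B k) δ ∧ imageTask (iterTask m B k) δ ⊆ A

/-! ### Auxiliary lemmas -/

lemma stepRel_symm {A : Finset ℕ} : Symmetric (StepRel A) := fun _ _ h => Or.symm h

lemma walk_exists {A : Finset ℕ} {x y : ℕ}
    (h : Relation.ReflTransGen (StepRel A) x y) :
    ∃ (L : ℕ) (f : ℕ → ℕ), f 0 = x ∧ f L = y ∧ ∀ t, t < L → StepRel A (f t) (f (t + 1)) := by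
  induction h with
  | refl => exact ⟨0, fun _ => x, rfl, rfl, fun t ht => absurd ht (by omega)⟩
  | @tail b c hw hs ih =>
    obtain ⟨L, f, h0, hL, hf⟩ := ih
    refine ⟨L + 1, fun t => if t ≤ L then f t else c, ?_, ?_, ?_⟩
    · simpa using h0
    · simp
    · intro t ht
      by_cases h1 : t < L
      · have e1 : (if t ≤ L then f t else c) = f t := if_pos (by omega)
        have e2 : (if t + 1 ≤ L then f (t + 1) else c) = f (t + 1) := if_pos (by omega)
        simp only [e1, e2]
        exact hf t h1
      · have ht' : t = L := by omega
        subst ht'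
        simp only [if_pos (le_refl t), if_neg (show ¬ t + 1 ≤ t by omega), hL]
        exact hs

lemma walk_props {n L : ℕ} {A : Finset ℕ} {f : ℕ → ℕ} (hAlt : ∀ i ∈ A, i < n)
    (h0 : f 0 = 0) (hf : ∀ t, t < L → StepRel A (f t) (f (t + 1))) :
    ∀ t, t ≤ L → f t % 2 = t % 2 ∧ f t ≤ n := by
  intro t
  induction t with
  | zero => intro _; simp [h0]
  | succ t ih =>
    intro ht
    obtain ⟨hp, hb⟩ := ih (by omega)
    rcases hf t (by omega) with ⟨he, hm⟩ | ⟨he, hm⟩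
    · have := hAlt _ hm
      omega
    · have := hAlt _ hm
      omega

lemma P1_ends {n : ℕ} {A : Finset ℕ} (hn : 1 ≤ n) (hAlt : ∀ i ∈ A, i < n)
    (h : P1 n A) : 0 ∈ A ∧ n - 1 ∈ A := by
  obtain ⟨L, f, h0, hL, hf⟩ := walk_exists h
  have hL1 : 1 ≤ L := by
    by_contra hc
    have hL0 : L = 0 := by omega
    rw [hL0, h0] at hL
    omega
  constructor
  · rcases hf 0 (by omega) with ⟨he, hm⟩ | ⟨he, hm⟩
    · rwa [h0] at hm
    · rw [h0] at he; omega
  · have hstep := hf (L - 1) (by omega)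
    rw [show L - 1 + 1 = L by omega, hL] at hstep
    rcases hstep with ⟨he, hm⟩ | ⟨he, hm⟩
    · rw [show f (L - 1) = n - 1 by omega] at hm
      exact hm
    · exact absurd (hAlt _ hm) (by omega)

lemma mem_comp {m e : ℕ} {A B : Finset ℕ} :
    e ∈ comp m A B ↔ ∃ i ∈ A, ∃ j ∈ B, e = i * m + (if Even i then j else m - 1 - j) := by
  constructor
  · intro h
    obtain ⟨p, hp, he⟩ := Finset.mem_image.1 h
    obtain ⟨h1, h2⟩ := Finset.mem_product.1 hp
    exact ⟨p.1, h1, p.2, h2, he.symm⟩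
  · rintro ⟨i, hi, j, hj, rfl⟩
    exact Finset.mem_image.2 ⟨(i, j), Finset.mem_product.2 ⟨hi, hj⟩, rfl⟩

lemma P1_comp {n m : ℕ} {A B : Finset ℕ} (hBlt : ∀ j ∈ B, j < m)
    (hA : P1 n A) (hB : P1 m B) : P1 (n * m) (comp m A B) := by
  have block : ∀ x, x ∈ A →
      Relation.ReflTransGen (StepRel (comp m A B)) (x * m) ((x + 1) * m) := by
    intro x hx
    rcases Nat.even_or_odd x with hev | hod
    · have hstep : ∀ u v, StepRel B u v →
          StepRel (comp m A B) (x * m + u) (x * m + v) := by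
        intro u v hs
        rcases hs with ⟨he, hm⟩ | ⟨he, hm⟩
        · exact Or.inl ⟨by omega, mem_comp.2 ⟨x, hx, u, hm, by rw [if_pos hev]⟩⟩
        · exact Or.inr ⟨by omega, mem_comp.2 ⟨x, hx, v, hm, by rw [if_pos hev]⟩⟩
      have hw : Relation.ReflTransGen (StepRel (comp m A B)) (x * m + 0) (x * m + m) :=
        Relation.ReflTransGen.lift (fun v => x * m + v) hstep _ _ hB
      simpa [Nat.succ_mul] using hw
    · have hne : ¬ Even x := by
        rw [Nat.even_iff]
        rw [Nat.odd_iff] at hod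
        omega
      have hx1 : (x + 1) * m = x * m + m := by ring
      have hstep : ∀ u v, StepRel B u v →
          StepRel (comp m A B) ((x + 1) * m - u) ((x + 1) * m - v) := by
        intro u v hs
        rcases hs with ⟨he, hm⟩ | ⟨he, hm⟩
        · have hu : u < m := hBlt _ hm
          exact Or.inr ⟨by omega, mem_comp.2 ⟨x, hx, u, hm, by rw [if_neg hne]; omega⟩⟩
        · have hv : v < m := hBlt _ hm
          exact Or.inl ⟨by omega, mem_comp.2 ⟨x, hx, v, hm, by rw [if_neg hne]; omega⟩⟩
      have hw : Relation.ReflTransGen (StepRel (comp m A B)) ((x + 1) * m - 0) ((x + 1) * m - m) :=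
        Relation.ReflTransGen.lift (fun v => (x + 1) * m - v) hstep _ _ hB
      have h1 : (x + 1) * m - 0 = (x + 1) * m := by omega
      have h2 : (x + 1) * m - m = x * m := by omega
      simp only [h1, h2] at hw
      exact (@Relation.ReflTransGen.stdSymm _ _ ⟨fun a b h => stepRel_symm h⟩).symm _ _ hw
  have main : ∀ a b : ℕ, Relation.ReflTransGen (StepRel A) a b →
      Relation.ReflTransGen (StepRel (comp m A B)) (a * m) (b * m) := by
    intro a b h
    induction h with
    | refl => exact Relation.ReflTransGen.refl
    | @tail p q hw hs ih =>
      rcases hs with ⟨he, hm⟩ | ⟨he, hm⟩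
      · rw [he]
        exact ih.trans (block p hm)
      · rw [he] at ih
        exact ih.trans ((@Relation.ReflTransGen.stdSymm _ _ ⟨fun a b h => stepRel_symm h⟩).symm _ _ (block q hm))
  have := main 0 n hA
  simpa [P1] using this

lemma iterTask_succ {m : ℕ} (B : Finset ℕ) {k : ℕ} (hk : 1 ≤ k) :
    iterTask m B (k + 1) = comp m (iterTask m B k) B := by
  obtain ⟨j, rfl⟩ : ∃ j, k = j + 1 := ⟨k - 1, by omega⟩
  rfl

lemma iter_facts {m : ℕ} {B : Finset ℕ} (hm : 2 ≤ m) (hmo : m % 2 = 1)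
    (hBlt : ∀ j ∈ B, j < m) :
    ∀ k, 1 ≤ k →
      (∀ e ∈ iterTask m B k, e < m ^ k) ∧
      (0 ∈ B → 0 ∈ iterTask m B k) ∧
      (m - 1 ∈ B → m ^ k - 1 ∈ iterTask m B k) ∧
      (P1 m B → P1 (m ^ k) (iterTask m B k)) := by
  intro k
  induction k with
  | zero => intro h; exact absurd h (by omega)
  | succ k ih =>
    intro hk
    rcases Nat.lt_or_ge k 1 with h1 | hk1
    · have hk0 : k = 0 := by omega
      subst hk0
      rw [show (0 : ℕ) + 1 = 1 from rfl, show iterTask m B 1 = B from rfl, pow_one]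
      exact ⟨hBlt, fun h => h, fun h => h, fun h => h⟩
    · obtain ⟨ihlt, ih0, ihtop, ihP1⟩ := ih hk1
      rw [iterTask_succ B hk1]
      have hpow : m ^ (k + 1) = m ^ k * m := pow_succ m k
      have hmk1 : 1 ≤ m ^ k := Nat.one_le_pow k m (by omega)
      have hmko : m ^ k % 2 = 1 := Nat.odd_iff.1 ((Nat.odd_iff.2 hmo).pow)
      have hmlem : m ≤ m ^ k * m := by
        have := Nat.mul_le_mul_right m hmk1
        rwa [one_mul] at this
      refine ⟨?_, ?_, ?_, ?_⟩
      · intro e he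
        obtain ⟨i, hi, j, hj, rfl⟩ := mem_comp.1 he
        have h1 := ihlt i hi
        have h2 := hBlt j hj
        have h3 : (if Even i then j else m - 1 - j) < m := by split_ifs <;> omega
        have h4 : (i + 1) * m ≤ m ^ k * m := Nat.mul_le_mul_right m (by omega)
        have h5 : (i + 1) * m = i * m + m := by ring
        omega
      · intro h0
        exact mem_comp.2 ⟨0, ih0 h0, 0, h0, by simp⟩
      · intro ht
        refine mem_comp.2 ⟨m ^ k - 1, ihtop ht, m - 1, ht, ?_⟩
        rw [if_pos (Nat.even_iff.2 (by omega))]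
        have h6 : (m ^ k - 1) * m = m ^ k * m - m := by
          rw [Nat.sub_mul, one_mul]
        omega
      · intro hP1
        have := P1_comp hBlt (ihP1 hP1) hP1
        rwa [← hpow] at this

lemma exists_gap {m : ℕ} {B : Finset ℕ} (h : ¬ P1 m B) : ∃ g, g < m ∧ g ∉ B := by
  by_contra hc
  push_neg at hc
  apply h
  have key : ∀ t, t ≤ m → Relation.ReflTransGen (StepRel B) 0 t := by
    intro t
    induction t with
    | zero => exact fun _ => Relation.ReflTransGen.refl
    | succ t ih =>
      intro ht
      exact (ih (by omega)).tail (Or.inl ⟨rfl, hc t (by omega)⟩)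
  exact key m le_rfl

/-- A one-shot (k = 1) solution scheme. -/
lemma solves_k1 {n m : ℕ} {A B : Finset ℕ} (δ : ℕ → ℕ)
    (hbd : ∀ i, δ i ≤ n) (hpar : ∀ i, δ i % 2 = i % 2)
    (hstep : ∀ i ∈ B, δ (i + 1) = δ i + 1 ∨ δ i = δ (i + 1) + 1)
    (hmin : ∀ i ∈ B, min (δ i) (δ (i + 1)) ∈ A)
    (h0 : 0 ∈ B → δ 0 = 0) (htop : m - 1 ∈ B → δ m = n) : Solves m n B A := by
  refine ⟨1, le_rfl, δ, ?_, ?_⟩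
  · rw [show iterTask m B 1 = B from rfl, pow_one]
    exact ⟨fun i _ => hbd i, fun i _ => ⟨hpar i, hpar (i + 1)⟩, hstep, h0, htop⟩
  · rw [show iterTask m B 1 = B from rfl]
    intro e he
    obtain ⟨i, hi, rfl⟩ := Finset.mem_image.1 he
    exact hmin i hi

/-- Construction when `P₁(A)` holds: the folded-walk map, for `k` with
`m ^ k` at least the length of the walk. -/
lemma solves_of_P1A {n m : ℕ} {A B : Finset ℕ} (hAlt : ∀ i ∈ A, i < n)
    (hno : n % 2 = 1) (hm2 : 2 ≤ m) (hmo : m % 2 = 1) (hP1 : P1 n A) :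
    Solves m n B A := by
  obtain ⟨L, f, h0, hL, hf⟩ := walk_exists hP1
  have hprops := walk_props hAlt h0 hf
  have hLodd : L % 2 = 1 := by
    have := (hprops L le_rfl).1
    rw [hL] at this
    omega
  have hends := P1_ends (by omega) hAlt hP1
  have hk : L ≤ m ^ (L + 1) := by
    calc L ≤ 2 ^ L := le_of_lt (Nat.lt_two_pow_self (n := L))
    _ ≤ 2 ^ (L + 1) := Nat.pow_le_pow_right (by omega) (by omega)
    _ ≤ m ^ (L + 1) := Nat.pow_le_pow_left hm2 _
  obtain ⟨δ, hδdef⟩ : ∃ δ : ℕ → ℕ,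
      δ = fun i => if i ≤ L then f i else (if (i - L) % 2 = 0 then n else n - 1) := ⟨_, rfl⟩
  have hδle : ∀ i, i ≤ L → δ i = f i := by
    intro i h
    simp only [hδdef]
    rw [if_pos h]
  have hδgt : ∀ i, L < i → δ i = if (i - L) % 2 = 0 then n else n - 1 := by
    intro i h
    simp only [hδdef]
    rw [if_neg (by omega)]
  have hδbd : ∀ i, δ i ≤ n := by
    intro i
    by_cases h : i ≤ L
    · rw [hδle i h]; exact (hprops i h).2
    · rw [hδgt i (by omega)]; split_ifs <;> omega
  have hδpar : ∀ i, δ i % 2 = i % 2 := by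
    intro i
    by_cases h : i ≤ L
    · rw [hδle i h]; exact (hprops i h).1
    · rw [hδgt i (by omega)]; split_ifs <;> omega
  have hδstep : ∀ i, (δ (i + 1) = δ i + 1 ∨ δ i = δ (i + 1) + 1) ∧
      min (δ i) (δ (i + 1)) ∈ A := by
    intro i
    by_cases h1 : i + 1 ≤ L
    · rw [hδle i (by omega), hδle (i + 1) h1]
      rcases hf i (by omega) with ⟨he, hm⟩ | ⟨he, hm⟩
      · exact ⟨Or.inl he, by rw [show min (f i) (f (i + 1)) = f i by omega]; exact hm⟩
      · exact ⟨Or.inr he, by rw [show min (f i) (f (i + 1)) = f (i + 1) by omega]; exact hm⟩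
    · by_cases h2 : i ≤ L
      · have hiL : i = L := by omega
        have e1 : δ i = n := by rw [hδle i h2, hiL, hL]
        have e2 : δ (i + 1) = n - 1 := by
          rw [hδgt (i + 1) (by omega), if_neg (by omega)]
        rw [e1, e2]
        refine ⟨Or.inr (by omega), ?_⟩
        rw [show min n (n - 1) = n - 1 by omega]
        exact hends.2
      · have e1 := hδgt i (by omega)
        have e2 := hδgt (i + 1) (by omega)
        by_cases h3 : (i - L) % 2 = 0
        · rw [if_pos h3] at e1
          rw [if_neg (by omega)] at e2
          rw [e1, e2]
          exact ⟨Or.inr (by omega),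
            by rw [show min n (n - 1) = n - 1 by omega]; exact hends.2⟩
        · rw [if_neg h3] at e1
          rw [if_pos (by omega)] at e2
          rw [e1, e2]
          exact ⟨Or.inl (by omega),
            by rw [show min (n - 1) n = n - 1 by omega]; exact hends.2⟩
  have hδ0 : δ 0 = 0 := by rw [hδle 0 (Nat.zero_le L)]; exact h0
  have hδtop : δ (m ^ (L + 1)) = n := by
    by_cases h : m ^ (L + 1) ≤ L
    · have he : m ^ (L + 1) = L := by omega
      rw [hδle _ h, he, hL]
    · rw [hδgt _ (by omega)]
      have hmk : m ^ (L + 1) % 2 = 1 := Nat.odd_iff.1 ((Nat.odd_iff.2 hmo).pow)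
      rw [if_pos (by omega)]
  refine ⟨L + 1, by omega, δ,
    ⟨fun i _ => hδbd i, fun i _ => ⟨hδpar i, hδpar (i + 1)⟩,
      fun i _ => (hδstep i).1, fun _ => hδ0, fun _ => hδtop⟩, ?_⟩
  intro e he
  obtain ⟨i, hi, rfl⟩ := Finset.mem_image.1 he
  exact (hδstep i).2

/-- Construction when `class(B) = 5`: map everything to a single edge of `A`. -/
lemma solves_C2 {n m : ℕ} {A B : Finset ℕ} (hAne : A.Nonempty) (hAlt : ∀ i ∈ A, i < n)
    (h0B : ¬ P2 B) (htB : ¬ P3 m B) : Solves m n B A := by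
  obtain ⟨a, ha⟩ := hAne
  have han := hAlt a ha
  have hbd : ∀ i, (if i % 2 = a % 2 then a else a + 1) ≤ n := by
    intro i; split_ifs <;> omega
  have hpar : ∀ i, (if i % 2 = a % 2 then a else a + 1) % 2 = i % 2 := by
    intro i; split_ifs <;> omega
  have hstep : ∀ i ∈ B, (if (i + 1) % 2 = a % 2 then a else a + 1) =
      (if i % 2 = a % 2 then a else a + 1) + 1 ∨
      (if i % 2 = a % 2 then a else a + 1) =
      (if (i + 1) % 2 = a % 2 then a else a + 1) + 1 := by
    intro i _
    by_cases h : i % 2 = a % 2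
    · rw [if_pos h, if_neg (by omega)]
      exact Or.inl rfl
    · rw [if_neg h, if_pos (by omega)]
      exact Or.inr rfl
  have hmin : ∀ i ∈ B, min (if i % 2 = a % 2 then a else a + 1)
      (if (i + 1) % 2 = a % 2 then a else a + 1) ∈ A := by
    intro i _
    by_cases h : i % 2 = a % 2
    · rw [if_pos h, if_neg (by omega), show min a (a + 1) = a by omega]
      exact ha
    · rw [if_neg h, if_pos (by omega), show min (a + 1) a = a by omega]
      exact ha
  exact solves_k1 _ hbd hpar hstep hmin (fun h => absurd h h0B) (fun h => absurd h htB)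

/-- Construction when `P₂(A)` and `¬P₃(B)`: map everything onto `{0,1}`. -/
lemma solves_C3 {n m : ℕ} {A B : Finset ℕ} (hn : 1 ≤ n) (h0A : P2 A) (htB : ¬ P3 m B) :
    Solves m n B A := by
  have hbd : ∀ i : ℕ, i % 2 ≤ n := by intro i; omega
  have hpar : ∀ i : ℕ, i % 2 % 2 = i % 2 := by intro i; omega
  have hstep : ∀ i ∈ B, (i + 1) % 2 = i % 2 + 1 ∨ i % 2 = (i + 1) % 2 + 1 := by
    intro i _; omega
  have hmin : ∀ i ∈ B, min (i % 2) ((i + 1) % 2) ∈ A := by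
    intro i _
    rw [show min (i % 2) ((i + 1) % 2) = 0 by omega]
    exact h0A
  exact solves_k1 _ hbd hpar hstep hmin (fun _ => by omega) (fun h => absurd h htB)

/-- Construction when `P₃(A)` and `¬P₂(B)`: map everything onto `{n-1,n}`. -/
lemma solves_C4 {n m : ℕ} {A B : Finset ℕ} (hno : n % 2 = 1) (hmo : m % 2 = 1)
    (htA : P3 n A) (h0B : ¬ P2 B) : Solves m n B A := by
  have hbd : ∀ i : ℕ, n - 1 + i % 2 ≤ n := by intro i; omega
  have hpar : ∀ i : ℕ, (n - 1 + i % 2) % 2 = i % 2 := by intro i; omega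
  have hstep : ∀ i ∈ B, n - 1 + (i + 1) % 2 = n - 1 + i % 2 + 1 ∨
      n - 1 + i % 2 = n - 1 + (i + 1) % 2 + 1 := by
    intro i _; omega
  have hmin : ∀ i ∈ B, min (n - 1 + i % 2) (n - 1 + (i + 1) % 2) ∈ A := by
    intro i _
    rw [show min (n - 1 + i % 2) (n - 1 + (i + 1) % 2) = n - 1 by omega]
    exact htA
  exact solves_k1 _ hbd hpar hstep hmin (fun h => absurd h h0B) (fun _ => by omega)

/-- Construction when `P₂(A)`, `P₃(A)` and `¬P₁(B)`: split at a gap of `B`. -/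
lemma solves_C5 {n m : ℕ} {A B : Finset ℕ} (hno : n % 2 = 1) (hmo : m % 2 = 1)
    (h0A : P2 A) (htA : P3 n A) (h1B : ¬ P1 m B) : Solves m n B A := by
  obtain ⟨g, hg, hgB⟩ := exists_gap h1B
  have hbd : ∀ i, (if i ≤ g then i % 2 else n - 1 + i % 2) ≤ n := by
    intro i; split_ifs <;> omega
  have hpar : ∀ i, (if i ≤ g then i % 2 else n - 1 + i % 2) % 2 = i % 2 := by
    intro i; split_ifs <;> omega
  have hsm : ∀ i ∈ B, ((if i + 1 ≤ g then (i + 1) % 2 else n - 1 + (i + 1) % 2) =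
      (if i ≤ g then i % 2 else n - 1 + i % 2) + 1 ∨
      (if i ≤ g then i % 2 else n - 1 + i % 2) =
      (if i + 1 ≤ g then (i + 1) % 2 else n - 1 + (i + 1) % 2) + 1) ∧
      min (if i ≤ g then i % 2 else n - 1 + i % 2)
        (if i + 1 ≤ g then (i + 1) % 2 else n - 1 + (i + 1) % 2) ∈ A := by
    intro i hiB
    have hig : i ≠ g := fun h => hgB (h ▸ hiB)
    by_cases h1 : i + 1 ≤ g
    · rw [if_pos (show i ≤ g by omega), if_pos h1]
      exact ⟨by omega, by rw [show min (i % 2) ((i + 1) % 2) = 0 by omega]; exact h0A⟩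
    · by_cases h2 : i ≤ g
      · exact absurd (by omega : i = g) hig
      · rw [if_neg h2, if_neg (show ¬ i + 1 ≤ g by omega)]
        exact ⟨by omega,
          by rw [show min (n - 1 + i % 2) (n - 1 + (i + 1) % 2) = n - 1 by omega]; exact htA⟩
  refine solves_k1 _ hbd hpar (fun i hi => (hsm i hi).1) (fun i hi => (hsm i hi).2) ?_ ?_
  · intro _
    rw [if_pos (Nat.zero_le g)]
  · intro _
    rw [if_neg (by omega)]
    omega

/-- Main theorem (decidable hierarchy of 2-process affine models): for any two
2-process affine tasks `A` on `n = 3^ℓ` and `B` on `m = 3^ℓ'`, the affine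
model `B*` solves `A` if and only if `class(A) ⊑ class(B)` in the class
order. -/
theorem solves_iff_class_le
    (ℓ ℓ' n m : ℕ) (hℓ : 1 ≤ ℓ) (hℓ' : 1 ≤ ℓ') (hn : n = 3 ^ ℓ) (hm : m = 3 ^ ℓ')
    (A B : Finset ℕ) (hAne : A.Nonempty) (hAlt : ∀ i ∈ A, i < n)
    (hBne : B.Nonempty) (hBlt : ∀ i ∈ B, i < m) :
    Solves m n B A ↔ ClassLE (classOf n A) (classOf m B) := by
  have hn3 : 3 ≤ n := by
    rw [hn]
    calc (3 : ℕ) = 3 ^ 1 := (pow_one 3).symm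
    _ ≤ 3 ^ ℓ := Nat.pow_le_pow_right (by omega) hℓ
  have hm3 : 3 ≤ m := by
    rw [hm]
    calc (3 : ℕ) = 3 ^ 1 := (pow_one 3).symm
    _ ≤ 3 ^ ℓ' := Nat.pow_le_pow_right (by omega) hℓ'
  have hno : n % 2 = 1 := by
    rw [hn]
    exact Nat.odd_iff.1 ((by decide : Odd 3).pow)
  have hmo : m % 2 = 1 := by
    rw [hm]
    exact Nat.odd_iff.1 ((by decide : Odd 3).pow)
  constructor
  · rintro ⟨k, hk, δ, ⟨hbd, hpar, hstep, h0, htop⟩, himg⟩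
    obtain ⟨hITlt, hIT0, hITtop, hITP1⟩ := iter_facts (by omega) hmo hBlt k hk
    have hmk1 : 1 ≤ m ^ k := Nat.one_le_pow k m (by omega)
    have hlift : ∀ x y, StepRel (iterTask m B k) x y → StepRel A (δ x) (δ y) := by
      intro x y hs
      rcases hs with ⟨he, hm'⟩ | ⟨he, hm'⟩
      · subst he
        have hmin : min (δ x) (δ (x + 1)) ∈ A := himg (Finset.mem_image_of_mem _ hm')
        rcases hstep x hm' with h' | h'
        · exact Or.inl ⟨by omega, by rwa [show min (δ x) (δ (x + 1)) = δ x by omega] at hmin⟩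
        · exact Or.inr ⟨by omega,
            by rwa [show min (δ x) (δ (x + 1)) = δ (x + 1) by omega] at hmin⟩
      · subst he
        have hmin : min (δ y) (δ (y + 1)) ∈ A := himg (Finset.mem_image_of_mem _ hm')
        rcases hstep y hm' with h' | h'
        · exact Or.inr ⟨by omega, by rwa [show min (δ y) (δ (y + 1)) = δ y by omega] at hmin⟩
        · exact Or.inl ⟨by omega,
            by rwa [show min (δ y) (δ (y + 1)) = δ (y + 1) by omega] at hmin⟩
    have key1 : P1 m B → P1 n A := by
      intro hP1B
      obtain ⟨hB0, hBt⟩ := P1_ends (by omega) hBlt hP1B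
      have hwalk := hITP1 hP1B
      have hmain : Relation.ReflTransGen (StepRel A) (δ 0) (δ (m ^ k)) :=
        Relation.ReflTransGen.lift δ hlift _ _ hwalk
      rw [h0 (hIT0 hB0), htop (hITtop hBt)] at hmain
      exact hmain
    have key2 : P2 B → P2 A := by
      intro h2B
      have h0k : 0 ∈ iterTask m B k := hIT0 h2B
      have hδ0 : δ 0 = 0 := h0 h0k
      have hmin : min (δ 0) (δ (0 + 1)) ∈ A := himg (Finset.mem_image_of_mem _ h0k)
      rcases hstep 0 h0k with h' | h'
      · rwa [show min (δ 0) (δ (0 + 1)) = 0 by omega] at hmin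
      · exfalso; omega
    have key3 : P3 m B → P3 n A := by
      intro h3B
      have htk : m ^ k - 1 ∈ iterTask m B k := hITtop h3B
      have hδt : δ (m ^ k) = n := htop htk
      have hbdt : δ (m ^ k - 1) ≤ n := hbd _ (by omega)
      have hmin : min (δ (m ^ k - 1)) (δ (m ^ k - 1 + 1)) ∈ A :=
        himg (Finset.mem_image_of_mem _ htk)
      have he : m ^ k - 1 + 1 = m ^ k := by omega
      rw [he] at hmin
      rcases hstep _ htk with h' | h'
      · rw [he] at h'
        rwa [show min (δ (m ^ k - 1)) (δ (m ^ k)) = n - 1 by omega] at hmin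
      · rw [he] at h'
        exfalso
        omega
    by_cases h1B : P1 m B
    · have h1A : P1 n A := key1 h1B
      simp [classOf, h1A, h1B, ClassLE]
    · by_cases h1A : P1 n A
      · refine Or.inr (Or.inl ?_)
        simp [classOf, h1A]
      · by_cases h2B : P2 B <;> by_cases h3B : P3 m B <;>
          by_cases h2A : P2 A <;> by_cases h3A : P3 n A <;>
          first
            | exact absurd (key2 h2B) h2A
            | exact absurd (key3 h3B) h3A
            | (simp only [classOf, if_neg h1A, if_neg h1B]
               first
                 | (rw [if_pos h2A, if_pos h3A, if_pos h2B, if_pos h3B]; unfold ClassLE; omega)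
                 | (rw [if_pos h2A, if_pos h3A, if_pos h2B, if_neg h3B]; unfold ClassLE; omega)
                 | (rw [if_pos h2A, if_pos h3A, if_neg h2B, if_pos h3B]; unfold ClassLE; omega)
                 | (rw [if_pos h2A, if_pos h3A, if_neg h2B, if_neg h3B]; unfold ClassLE; omega)
                 | (rw [if_pos h2A, if_neg h3A, if_pos h2B, if_neg h3B]; unfold ClassLE; omega)
                 | (rw [if_pos h2A, if_neg h3A, if_neg h2B, if_neg h3B]; unfold ClassLE; omega)
                 | (rw [if_neg h2A, if_pos h3A, if_pos h2B, if_pos h3B]; unfold ClassLE; omega)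
                 | (rw [if_neg h2A, if_pos h3A, if_neg h2B, if_pos h3B]; unfold ClassLE; omega)
                 | (rw [if_neg h2A, if_pos h3A, if_neg h2B, if_neg h3B]; unfold ClassLE; omega)
                 | (rw [if_neg h2A, if_neg h3A, if_neg h2B, if_neg h3B]; unfold ClassLE; omega))
  · intro hle
    by_cases h1A : P1 n A
    · exact solves_of_P1A hAlt hno (by omega) hmo h1A
    · by_cases h1B : P1 m B
      · exfalso
        have hB1 : classOf m B = 1 := by simp [classOf, h1B]
        have hA1 : ¬ classOf n A = 1 := by
          simp only [classOf, if_neg h1A]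
          split_ifs <;> omega
        rw [hB1] at hle
        unfold ClassLE at hle
        omega
      · by_cases h2A : P2 A <;> by_cases h3A : P3 n A <;>
          by_cases h2B : P2 B <;> by_cases h3B : P3 m B <;>
          first
            | exact solves_C5 hno hmo h2A h3A h1B
            | exact solves_C3 (by omega) h2A h3B
            | exact solves_C4 hno hmo h3A h2B
            | exact solves_C2 hAne hAlt h2B h3B
            | (exfalso
               revert hle
               simp [classOf, ClassLE, h1A, h1B, h2A, h3A, h2B, h3B])
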